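/- With t = [[1,1],[0,1]] ∈ G, the map Θ₁ defined by Θ₁(f) = f·y₁ + (t·f)·y₂ + (t²·f)·y₃ is well defined from S^H_χ into the G-fixed elements of R lying in the S-submodule spanned by y₁, y₂, y₃, and Θ₁ is an isomorphism of S^G-modules from S^H_χ onto the module of G-invariant 1-forms {f₁y₁ + f₂y₂ + f₃y₃ : fₛ ∈ S} ∩ R^G. -/

import Mathlib

open Matrix MvPolynomial

set_option synthInstance.maxHeartbeats 1000000
set_option maxHeartbeats 1000000

abbrev F3 : Type := ZMod 3
abbrev G3 : Type := Matrix.SpecialLinearGroup (Fin 2) F3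
abbrev S3 : Type := MvPolynomial (Fin 3) F3

/-- The fixed basis `v₁, v₂, v₃` of the traceless `2 × 2` matrices over `𝔽₃`. -/
def V : Fin 3 → Matrix (Fin 2) (Fin 2) F3 :=
  ![!![0, 1; -1, 0], !![-1, -1; -1, 1], !![1, -1; -1, -1]]

/-- Coordinates of a traceless matrix with respect to the basis `v₁, v₂, v₃`. -/
def coordM : Fin 3 → Matrix (Fin 2) (Fin 2) F3 → F3 :=
  ![fun X => X 1 0 - X 0 1, fun X => X 0 0 - X 0 1 - X 1 0, fun X => -(X 0 0 + X 0 1 + X 1 0)]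

/-- Matrix of the (dual) action of `g` on `M*`: `g • x_s = ∑ r, (rep g) s r • x_r`, where
`(rep g) s r = x_s (g⁻¹ • v_r) = coordM s (g⁻¹ vᵣ g)`, coming from `(g • f)(v) = f(g⁻¹ • v)`. -/
def rep (g : G3) : Matrix (Fin 3) (Fin 3) F3 :=
  Matrix.of fun s r => coordM s ((g⁻¹ : G3) * V r * (g : Matrix (Fin 2) (Fin 2) F3))

/-- The action of `g ∈ SL₂(𝔽₃)` on `S = 𝔽₃[x₁,x₂,x₃]` by algebra automorphisms, given by
substituting `x_s ↦ g • x_s = ∑ r, (rep g) s r • x_r`. -/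
noncomputable def actS (g : G3) : S3 →ₐ[F3] S3 :=
  MvPolynomial.aeval fun s => ∑ r : Fin 3, rep g s r • MvPolynomial.X r

noncomputable def a1 : S3 := X 0 ^ 2 + X 1 ^ 2 + X 2 ^ 2
noncomputable def a2 : S3 := X 0 * X 1 * X 2
noncomputable def a3 : S3 := X 0 ^ 4 + X 1 ^ 4 + X 2 ^ 4
noncomputable def bP : S3 := X 0 ^ 4 * X 1 ^ 2 + X 0 ^ 2 * X 2 ^ 4 + X 1 ^ 4 * X 2 ^ 2
noncomputable def av : Fin 3 → S3 := ![a1, a2, a3]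

def tm : G3 := ⟨!![1, 1; 0, 1], by decide⟩
def im : G3 := ⟨!![0, 1; -1, 0], by decide⟩
def jm : G3 := ⟨!![1, -1; -1, -1], by decide⟩

/-- The quaternion subgroup `H = ⟨i, j⟩ ≅ Q₈` of `SL₂(𝔽₃)`. -/
def H3 : Subgroup G3 := Subgroup.closure {im, jm}

/-- The character with `χ(±e) = χ(±i) = 1` and `χ(±j) = χ(±k) = -1` (its values off the
set `{±e, ±i}` are `-1`; only the restriction to `H` is ever used). -/
def chi (g : G3) : F3 :=
  if (g : Matrix (Fin 2) (Fin 2) F3) = 1 ∨ (g : Matrix (Fin 2) (Fin 2) F3) = -1 ∨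
     (g : Matrix (Fin 2) (Fin 2) F3) = (im : Matrix (Fin 2) (Fin 2) F3) ∨
     (g : Matrix (Fin 2) (Fin 2) F3) = -(im : Matrix (Fin 2) (Fin 2) F3) then 1 else -1

/-- The `𝔽₃`-submodule `S^H_χ` of `χ`-relative `H`-invariants in `S`. -/
noncomputable def relInv : Submodule F3 S3 where
  carrier := {f | ∀ h ∈ H3, actS h f = chi h • f}
  add_mem' := by
    intro f g hf hg h hh
    rw [map_add, hf h hh, hg h hh, smul_add]
  zero_mem' := by
    intro h hh
    rw [map_zero, smul_zero]
  smul_mem' := by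
    intro c f hf h hh
    rw [_root_.map_smul, hf h hh, smul_comm]

open TensorProduct

/-- The exterior algebra `Λ(M*)` on `y₁, y₂, y₃` (with `M*` in dual-basis coordinates). -/
abbrev Lam : Type := ExteriorAlgebra F3 (Fin 3 → F3)

/-- `y_s = dx_s`, the exterior generators. -/
noncomputable def yy (s : Fin 3) : Lam := ExteriorAlgebra.ι F3 (Pi.single s 1)

/-- The linear action of `g` on the coordinate space of `y₁, y₂, y₃`:
`y_s ↦ ∑ r, (rep g) s r • y_r`. -/
noncomputable def repL (g : G3) : (Fin 3 → F3) →ₗ[F3] (Fin 3 → F3) :=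
  Matrix.toLin' (rep g)ᵀ

/-- The algebra of differential forms `R = S ⊗ Λ(M*)`: the graded-commutative `𝔽₃`-algebra
generated by the central `x₁, x₂, x₃` and the anticommuting `y₁, y₂, y₃`. -/
abbrev Rf : Type := S3 ⊗[F3] Lam

/-- The action of `g ∈ SL₂(𝔽₃)` on `R` by ring automorphisms, acting on `x`'s as on `S`
and on `y₁, y₂, y₃` by the same matrices as on `x₁, x₂, x₃`. -/
noncomputable def actR (g : G3) : Rf →ₐ[F3] Rf :=
  Algebra.TensorProduct.map (actS g) (ExteriorAlgebra.map (repL g))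

noncomputable def c1 : Rf := X 0 ⊗ₜ[F3] yy 0 + X 1 ⊗ₜ[F3] yy 1 + X 2 ⊗ₜ[F3] yy 2
noncomputable def c2 : Rf :=
  (X 1 * X 2) ⊗ₜ[F3] yy 0 + (X 2 * X 0) ⊗ₜ[F3] yy 1 + (X 0 * X 1) ⊗ₜ[F3] yy 2
noncomputable def c3 : Rf :=
  (X 0 ^ 3) ⊗ₜ[F3] yy 0 + (X 1 ^ 3) ⊗ₜ[F3] yy 1 + (X 2 ^ 3) ⊗ₜ[F3] yy 2
noncomputable def c4 : Rf :=
  (X 0 * X 1 ^ 2) ⊗ₜ[F3] yy 0 + (X 1 * X 2 ^ 2) ⊗ₜ[F3] yy 1 + (X 2 * X 0 ^ 2) ⊗ₜ[F3] yy 2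
noncomputable def c5 : Rf :=
  (X 1 ^ 3 * X 2) ⊗ₜ[F3] yy 0 + (X 2 ^ 3 * X 0) ⊗ₜ[F3] yy 1 + (X 0 ^ 3 * X 1) ⊗ₜ[F3] yy 2
noncomputable def c6 : Rf :=
  (X 0 ^ 3 * X 1 ^ 2) ⊗ₜ[F3] yy 0 + (X 1 ^ 3 * X 2 ^ 2) ⊗ₜ[F3] yy 1 +
    (X 2 ^ 3 * X 0 ^ 2) ⊗ₜ[F3] yy 2

noncomputable def d1 : Rf :=
  X 0 ⊗ₜ[F3] (yy 1 * yy 2) + X 1 ⊗ₜ[F3] (yy 2 * yy 0) + X 2 ⊗ₜ[F3] (yy 0 * yy 1)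
noncomputable def d2 : Rf :=
  (X 1 * X 2) ⊗ₜ[F3] (yy 1 * yy 2) + (X 2 * X 0) ⊗ₜ[F3] (yy 2 * yy 0) +
    (X 0 * X 1) ⊗ₜ[F3] (yy 0 * yy 1)
noncomputable def d3 : Rf :=
  (X 0 ^ 3) ⊗ₜ[F3] (yy 1 * yy 2) + (X 1 ^ 3) ⊗ₜ[F3] (yy 2 * yy 0) +
    (X 2 ^ 3) ⊗ₜ[F3] (yy 0 * yy 1)
noncomputable def d4 : Rf :=
  (X 0 * X 1 ^ 2) ⊗ₜ[F3] (yy 1 * yy 2) + (X 1 * X 2 ^ 2) ⊗ₜ[F3] (yy 2 * yy 0) +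
    (X 2 * X 0 ^ 2) ⊗ₜ[F3] (yy 0 * yy 1)
noncomputable def d5 : Rf :=
  (X 1 ^ 3 * X 2) ⊗ₜ[F3] (yy 1 * yy 2) + (X 2 ^ 3 * X 0) ⊗ₜ[F3] (yy 2 * yy 0) +
    (X 0 ^ 3 * X 1) ⊗ₜ[F3] (yy 0 * yy 1)
noncomputable def d6 : Rf :=
  (X 0 ^ 3 * X 1 ^ 2) ⊗ₜ[F3] (yy 1 * yy 2) + (X 1 ^ 3 * X 2 ^ 2) ⊗ₜ[F3] (yy 2 * yy 0) +
    (X 2 ^ 3 * X 0 ^ 2) ⊗ₜ[F3] (yy 0 * yy 1)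

/-- The top form `y₁y₂y₃`. -/
noncomputable def y123 : Lam := yy 0 * yy 1 * yy 2

/-- `Θ₁(f) = f·y₁ + (t·f)·y₂ + (t²·f)·y₃`. -/
noncomputable def Theta1 (f : S3) : Rf :=
  f ⊗ₜ[F3] yy 0 + (actS tm f) ⊗ₜ[F3] yy 1 + (actS tm (actS tm f)) ⊗ₜ[F3] yy 2

/-- The `S`-submodule of `R` spanned by `y₁, y₂, y₃` (the 1-forms). -/
def oneForms : Set Rf :=
  {z | ∃ f₁ f₂ f₃ : S3, z = f₁ ⊗ₜ[F3] yy 0 + f₂ ⊗ₜ[F3] yy 1 + f₃ ⊗ₜ[F3] yy 2}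

/-- `Θ₁(f) = f·y₁ + (t·f)·y₂ + (t²·f)·y₃` is well defined from `S^H_χ` into the
`G`-invariant 1-forms, and is an isomorphism of `S^G`-modules from `S^H_χ` onto
`{f₁y₁ + f₂y₂ + f₃y₃ : fₛ ∈ S} ∩ R^G`. -/

/- ----------------- auxiliary lemmas ----------------- -/

lemma tld : ∀ a b c : F3, !![a, b; c, -a] =
    (c - b) • V 0 + ((a - b - c) • V 1 + (-(a + b + c)) • V 2) := by decide

lemma traceless_decomp (A : Matrix (Fin 2) (Fin 2) F3) (h : A 1 1 = -(A 0 0)) :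
    A = ∑ s : Fin 3, coordM s A • V s := by
  rw [Fin.sum_univ_three]
  have hc0 : coordM 0 A = A 1 0 - A 0 1 := rfl
  have hc1 : coordM 1 A = A 0 0 - A 0 1 - A 1 0 := rfl
  have hc2 : coordM 2 A = -(A 0 0 + A 0 1 + A 1 0) := rfl
  rw [hc0, hc1, hc2]
  nth_rewrite 1 [Matrix.eta_fin_two A]
  rw [h, tld]
  exact (add_assoc _ _ _).symm

lemma traceV : ∀ r : Fin 3, Matrix.trace (V r) = 0 := by decide

lemma rep_one : rep 1 = 1 := by decide

lemma conjV (g : G3) (r : Fin 3) :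
    ((g⁻¹ : G3) : Matrix (Fin 2) (Fin 2) F3) * V r * (g : Matrix (Fin 2) (Fin 2) F3)
      = ∑ s : Fin 3, rep g s r • V s := by
  set A : Matrix (Fin 2) (Fin 2) F3 :=
    ((g⁻¹ : G3) : Matrix (Fin 2) (Fin 2) F3) * V r * (g : Matrix (Fin 2) (Fin 2) F3) with hA
  have hgg : (g : Matrix (Fin 2) (Fin 2) F3) * ((g⁻¹ : G3) : Matrix (Fin 2) (Fin 2) F3) = 1 := by
    rw [← Matrix.SpecialLinearGroup.coe_mul, mul_inv_cancel,
      Matrix.SpecialLinearGroup.coe_one]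
  have htr : Matrix.trace A = 0 := by
    rw [hA, Matrix.trace_mul_comm, ← mul_assoc, hgg, one_mul, traceV]
  have h11 : A 1 1 = -(A 0 0) := by
    rw [Matrix.trace_fin_two] at htr
    linear_combination htr
  have hco : ∀ s : Fin 3, rep g s r = coordM s A := fun s => rfl
  calc A = ∑ s : Fin 3, coordM s A • V s := traceless_decomp A h11
  _ = ∑ s : Fin 3, rep g s r • V s := by simp only [hco]

lemma coordM_lin3 (s : Fin 3) (c0 c1 c2 : F3) (A0 A1 A2 : Matrix (Fin 2) (Fin 2) F3) :
    coordM s (c0 • A0 + c1 • A1 + c2 • A2)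
      = c0 * coordM s A0 + c1 * coordM s A1 + c2 * coordM s A2 := by
  fin_cases s <;>
    simp [coordM, Matrix.add_apply, Matrix.smul_apply, smul_eq_mul] <;> ring

lemma repMul (g g' : G3) : rep (g * g') = rep g' * rep g := by
  ext s r
  show coordM s (((g * g')⁻¹ : G3) * V r * ((g * g' : G3) : Matrix (Fin 2) (Fin 2) F3)) = _
  rw [_root_.mul_inv_rev, Matrix.SpecialLinearGroup.coe_mul, Matrix.SpecialLinearGroup.coe_mul]
  have h1 : ((g'⁻¹ : G3) : Matrix (Fin 2) (Fin 2) F3) * (g⁻¹ : G3) * V r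
      * ((g : Matrix (Fin 2) (Fin 2) F3) * (g' : G3))
      = (g'⁻¹ : G3) * (((g⁻¹ : G3) * V r * (g : G3) : Matrix (Fin 2) (Fin 2) F3))
        * ((g' : G3) : Matrix (Fin 2) (Fin 2) F3) := by
    noncomm_ring
  rw [h1, conjV g r, Fin.sum_univ_three]
  have h2 : ((g'⁻¹ : G3) : Matrix (Fin 2) (Fin 2) F3)
      * (rep g 0 r • V 0 + rep g 1 r • V 1 + rep g 2 r • V 2)
      * ((g' : G3) : Matrix (Fin 2) (Fin 2) F3)
      = rep g 0 r • ((g'⁻¹ : G3) * V 0 * (g' : G3) : Matrix (Fin 2) (Fin 2) F3)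
      + rep g 1 r • ((g'⁻¹ : G3) * V 1 * (g' : G3) : Matrix (Fin 2) (Fin 2) F3)
      + rep g 2 r • ((g'⁻¹ : G3) * V 2 * (g' : G3) : Matrix (Fin 2) (Fin 2) F3) := by
    simp [Matrix.mul_add, Matrix.add_mul, Matrix.mul_smul, Matrix.smul_mul]
  rw [h2, coordM_lin3]
  have e0 : coordM s ((g'⁻¹ : G3) * V 0 * (g' : G3) : Matrix (Fin 2) (Fin 2) F3) = rep g' s 0 := rfl
  have e1 : coordM s ((g'⁻¹ : G3) * V 1 * (g' : G3) : Matrix (Fin 2) (Fin 2) F3) = rep g' s 1 := rfl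
  have e2 : coordM s ((g'⁻¹ : G3) * V 2 * (g' : G3) : Matrix (Fin 2) (Fin 2) F3) = rep g' s 2 := rfl
  rw [e0, e1, e2, Matrix.mul_apply, Fin.sum_univ_three]
  ring

lemma actS_actS (g g' : G3) (f : S3) : actS g (actS g' f) = actS (g * g') f := by
  have h : (actS g).comp (actS g') = actS (g * g') := by
    apply MvPolynomial.algHom_ext
    intro s
    simp only [AlgHom.comp_apply, actS, aeval_X, map_sum, _root_.map_smul]
    simp only [aeval_X, Finset.smul_sum, smul_smul, repMul, Matrix.mul_apply,
      Finset.sum_smul]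
    rw [Finset.sum_comm]
  have := congrArg (fun φ : S3 →ₐ[F3] S3 => φ f) h
  simpa using this

lemma actS_one (f : S3) : actS 1 f = f := by
  have h : actS (1 : G3) = AlgHom.id F3 S3 := by
    apply MvPolynomial.algHom_ext
    intro s
    simp [actS, rep_one, Matrix.one_apply, ite_smul]
  rw [h]; rfl

lemma tm3 : tm * tm * tm = 1 := Subtype.ext (by decide)
lemma it_eq : im * tm = tm * jm := Subtype.ext (by decide)
lemma itt_eq : im * tm * tm = tm * (tm * (im * jm)) := Subtype.ext (by decide)

lemma actS_tm3 (f : S3) : actS tm (actS tm (actS tm f)) = f := by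
  rw [actS_actS, actS_actS, tm3, actS_one]

lemma repL_apply (g : G3) (v : Fin 3 → F3) : repL g v = (rep g)ᵀ.mulVec v :=
  Matrix.toLin'_apply _ _

lemma repL_repL (g g' : G3) (v : Fin 3 → F3) : repL g (repL g' v) = repL (g * g') v := by
  simp only [repL_apply, Matrix.mulVec_mulVec, ← Matrix.transpose_mul, repMul]

lemma repL_one (v : Fin 3 → F3) : repL 1 v = v := by
  simp [repL_apply, rep_one]

lemma repLtm0 : repL tm (Pi.single 0 1) = Pi.single 1 1 := by rw [repL_apply]; decide
lemma repLtm1 : repL tm (Pi.single 1 1) = Pi.single 2 1 := by rw [repL_apply]; decide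
lemma repLtm2 : repL tm (Pi.single 2 1) = Pi.single 0 1 := by rw [repL_apply]; decide
lemma repLim0 : repL im (Pi.single 0 1) = Pi.single 0 1 := by rw [repL_apply]; decide
lemma repLim1 : repL im (Pi.single 1 1) = -Pi.single 1 1 := by rw [repL_apply]; decide
lemma repLim2 : repL im (Pi.single 2 1) = -Pi.single 2 1 := by rw [repL_apply]; decide

lemma mapLtm0 : ExteriorAlgebra.map (repL tm) (yy 0) = yy 1 := by
  unfold yy; rw [ExteriorAlgebra.map_apply_ι, repLtm0]
lemma mapLtm1 : ExteriorAlgebra.map (repL tm) (yy 1) = yy 2 := by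
  unfold yy; rw [ExteriorAlgebra.map_apply_ι, repLtm1]
lemma mapLtm2 : ExteriorAlgebra.map (repL tm) (yy 2) = yy 0 := by
  unfold yy; rw [ExteriorAlgebra.map_apply_ι, repLtm2]
lemma mapLim0 : ExteriorAlgebra.map (repL im) (yy 0) = yy 0 := by
  unfold yy; rw [ExteriorAlgebra.map_apply_ι, repLim0]
lemma mapLim1 : ExteriorAlgebra.map (repL im) (yy 1) = -yy 1 := by
  unfold yy; rw [ExteriorAlgebra.map_apply_ι, repLim1, map_neg]
lemma mapLim2 : ExteriorAlgebra.map (repL im) (yy 2) = -yy 2 := by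
  unfold yy; rw [ExteriorAlgebra.map_apply_ι, repLim2, map_neg]

lemma actR_tmul (g : G3) (f : S3) (w : Lam) :
    actR g (f ⊗ₜ[F3] w) = actS g f ⊗ₜ[F3] ExteriorAlgebra.map (repL g) w :=
  Algebra.TensorProduct.map_tmul _ _ _ _

lemma mapL_mapL (g g' : G3) (w : Lam) :
    ExteriorAlgebra.map (repL g) (ExteriorAlgebra.map (repL g') w)
      = ExteriorAlgebra.map (repL (g * g')) w := by
  have hL : repL g ∘ₗ repL g' = repL (g * g') := LinearMap.ext (repL_repL g g')
  calc ExteriorAlgebra.map (repL g) (ExteriorAlgebra.map (repL g') w)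
      = ((ExteriorAlgebra.map (repL g)).comp (ExteriorAlgebra.map (repL g'))) w := rfl
    _ = ExteriorAlgebra.map (repL g ∘ₗ repL g') w := by rw [ExteriorAlgebra.map_comp_map]
    _ = ExteriorAlgebra.map (repL (g * g')) w := by rw [hL]

lemma actR_actR (g g' : G3) (z : Rf) : actR g (actR g' z) = actR (g * g') z := by
  induction z using TensorProduct.induction_on with
  | zero => simp
  | tmul f w => rw [actR_tmul, actR_tmul, actR_tmul, actS_actS, mapL_mapL]
  | add a b ha hb => simp [map_add, ha, hb]

lemma actR_one (z : Rf) : actR 1 z = z := by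
  have hL : repL (1 : G3) = LinearMap.id := LinearMap.ext repL_one
  induction z using TensorProduct.induction_on with
  | zero => simp
  | tmul f w =>
      rw [actR_tmul, actS_one, hL, ExteriorAlgebra.map_id]
      rfl
  | add a b ha hb => simp [map_add, ha, hb]

def Q8 (g : G3) : Prop :=
  (g : Matrix (Fin 2) (Fin 2) F3) ∈
    ([1, -1, im.1, -im.1, jm.1, -jm.1, (im * jm).1, -(im * jm).1] : List (Matrix (Fin 2) (Fin 2) F3))

instance (g : G3) : Decidable (Q8 g) := by unfold Q8; infer_instance

lemma q8_im : Q8 im := by decide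
lemma q8_jm : Q8 jm := by decide
lemma q8_one : Q8 1 := by decide
lemma chi_im : chi im = 1 := by decide
lemma chi_jm : chi jm = -1 := by decide
lemma chi_one : chi 1 = 1 := by decide
lemma q8_mul : ∀ g g' : G3, Q8 g → Q8 g' → (Q8 (g * g') ∧ chi (g * g') = chi g * chi g') := by
  decide
lemma q8_inv : ∀ g : G3, Q8 g → (Q8 g⁻¹ ∧ chi g⁻¹ = chi g) := by decide
lemma chi_sq : ∀ g : G3, chi g * chi g = 1 := by
  intro g; unfold chi; split <;> decide

lemma words : ∀ g : G3, ∃ a : Fin 3, ∃ b : Fin 4, ∃ c : Fin 3,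
    (g : Matrix (Fin 2) (Fin 2) F3)
      = ((tm ^ (a : ℕ) * (im ^ (b : ℕ) * tm ^ (c : ℕ)) : G3) : Matrix (Fin 2) (Fin 2) F3) := by
  decide

noncomputable def coefL (s : Fin 3) : Lam →ₗ[F3] F3 :=
  (LinearMap.proj s : (Fin 3 → F3) →ₗ[F3] F3).comp ExteriorAlgebra.ιInv

noncomputable def coefB (s : Fin 3) : S3 →ₗ[F3] Lam →ₗ[F3] S3 :=
  LinearMap.mk₂ F3 (fun f w => coefL s w • f)
    (fun f f' w => smul_add _ _ _)
    (fun c f w => smul_comm _ _ _)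
    (fun f w w' => by rw [map_add, add_smul])
    (fun c f w => by rw [_root_.map_smul, smul_eq_mul, SemigroupAction.mul_smul])

noncomputable def coef (s : Fin 3) : Rf →ₗ[F3] S3 := TensorProduct.lift (coefB s)

lemma coef_tmul (s : Fin 3) (f : S3) (w : Lam) : coef s (f ⊗ₜ[F3] w) = coefL s w • f := rfl

lemma coefL_yy (s r : Fin 3) : coefL s (yy r) = (Pi.single r 1 : Fin 3 → F3) s := by
  unfold coefL yy
  rw [LinearMap.comp_apply]
  rw [ExteriorAlgebra.ι_leftInverse (Pi.single r 1)]
  rfl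

lemma coef_form (s : Fin 3) (f0 f1 f2 : S3) :
    coef s (f0 ⊗ₜ[F3] yy 0 + f1 ⊗ₜ[F3] yy 1 + f2 ⊗ₜ[F3] yy 2)
      = (Pi.single 0 1 : Fin 3 → F3) s • f0 + (Pi.single 1 1 : Fin 3 → F3) s • f1
        + (Pi.single 2 1 : Fin 3 → F3) s • f2 := by
  rw [map_add, map_add, coef_tmul, coef_tmul, coef_tmul, coefL_yy, coefL_yy, coefL_yy]

lemma extract (f0 f1 f2 g0 g1 g2 : S3)
    (h : f0 ⊗ₜ[F3] yy 0 + f1 ⊗ₜ[F3] yy 1 + f2 ⊗ₜ[F3] yy 2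
       = g0 ⊗ₜ[F3] yy 0 + g1 ⊗ₜ[F3] yy 1 + g2 ⊗ₜ[F3] yy 2) :
    f0 = g0 ∧ f1 = g1 ∧ f2 = g2 := by
  refine ⟨?_, ?_, ?_⟩
  · have := congrArg (coef 0) h
    rw [coef_form, coef_form] at this
    simpa using this
  · have := congrArg (coef 1) h
    rw [coef_form, coef_form] at this
    simpa using this
  · have := congrArg (coef 2) h
    rw [coef_form, coef_form] at this
    simpa using this

lemma actR_pow (g : G3) (z : Rf) (h : actR g z = z) : ∀ n : ℕ, actR (g ^ n) z = z
  | 0 => by rw [pow_zero]; exact actR_one z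
  | n + 1 => by rw [pow_succ, ← actR_actR, h, actR_pow g z h n]

lemma inv_all (z : Rf) (ht : actR tm z = z) (hi : actR im z = z) (g : G3) : actR g z = z := by
  obtain ⟨a, b, c, hw⟩ := words g
  have hg : g = tm ^ (a : ℕ) * (im ^ (b : ℕ) * tm ^ (c : ℕ)) := Subtype.ext hw
  rw [hg, ← actR_actR, ← actR_actR, actR_pow tm z ht, actR_pow im z hi, actR_pow tm z ht]

lemma actR_tm_Theta (f : S3) : actR tm (Theta1 f) = Theta1 f := by
  unfold Theta1
  rw [map_add, map_add, actR_tmul, actR_tmul, actR_tmul, mapLtm0, mapLtm1, mapLtm2, actS_tm3]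
  abel

lemma actS_im_tm (f : S3) (hJ : actS jm f = -f) : actS im (actS tm f) = -(actS tm f) := by
  rw [actS_actS, it_eq, ← actS_actS, hJ, map_neg]

lemma actS_im_tm2 (f : S3) (hI : actS im f = f) (hJ : actS jm f = -f) :
    actS im (actS tm (actS tm f)) = -(actS tm (actS tm f)) := by
  rw [actS_actS, actS_actS, itt_eq, ← actS_actS, ← actS_actS, ← actS_actS, hJ, _root_.map_neg,
    hI, _root_.map_neg, _root_.map_neg]

lemma actR_im_Theta (f : S3) (hI : actS im f = f) (hJ : actS jm f = -f) :
    actR im (Theta1 f) = Theta1 f := by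
  unfold Theta1
  rw [map_add, map_add, actR_tmul, actR_tmul, actR_tmul, mapLim0, mapLim1, mapLim2, hI,
    actS_im_tm f hJ, actS_im_tm2 f hI hJ]
  simp only [TensorProduct.tmul_neg, TensorProduct.neg_tmul, neg_neg]

lemma relInv_of_gen (f : S3) (hI : actS im f = f) (hJ : actS jm f = -f) :
    ∀ h ∈ H3, actS h f = chi h • f := by
  intro h hh
  have key : Q8 h ∧ actS h f = chi h • f := by
    refine Subgroup.closure_induction ?_ ?_ ?_ ?_ hh
    · intro x hx
      rcases hx with hx | hx
      · subst hx; exact ⟨q8_im, by rw [hI, chi_im, one_smul]⟩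
      · rw [Set.mem_singleton_iff] at hx
        subst hx; exact ⟨q8_jm, by rw [hJ, chi_jm, neg_one_smul]⟩
    · exact ⟨q8_one, by rw [actS_one, chi_one, one_smul]⟩
    · intro x y _ _ hpx hpy
      obtain ⟨qx, px⟩ := hpx
      obtain ⟨qy, py⟩ := hpy
      refine ⟨(q8_mul x y qx qy).1, ?_⟩
      rw [← actS_actS, py, _root_.map_smul, px, smul_smul, mul_comm (chi y) (chi x),
        ← (q8_mul x y qx qy).2]
    · intro x _ hpx
      obtain ⟨qx, px⟩ := hpx
      refine ⟨(q8_inv x qx).1, ?_⟩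
      have h1 : actS x⁻¹ (actS x f) = f := by rw [actS_actS, inv_mul_cancel, actS_one]
      rw [px, _root_.map_smul] at h1
      calc actS x⁻¹ f = (chi x * chi x) • actS x⁻¹ f := by rw [chi_sq x, one_smul]
        _ = chi x • (chi x • actS x⁻¹ f) := by rw [SemigroupAction.mul_smul]
        _ = chi x • f := by rw [h1]
        _ = chi x⁻¹ • f := by rw [(q8_inv x qx).2]
  exact key.2

lemma im_mem_H3 : im ∈ H3 := Subgroup.subset_closure (Set.mem_insert _ _)
lemma jm_mem_H3 : jm ∈ H3 := Subgroup.subset_closure (Set.mem_insert_of_mem _ rfl)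

lemma gen_of_relInv (f : S3) (hf : ∀ h ∈ H3, actS h f = chi h • f) :
    actS im f = f ∧ actS jm f = -f := by
  constructor
  · have := hf im im_mem_H3
    rwa [chi_im, one_smul] at this
  · have := hf jm jm_mem_H3
    rwa [chi_jm, neg_one_smul] at this


theorem stmt9 :
    -- well defined into the `G`-invariant `1`-forms
    (∀ f : S3, (∀ h ∈ H3, actS h f = chi h • f) →
      Theta1 f ∈ oneForms ∧ ∀ g : G3, actR g (Theta1 f) = Theta1 f) ∧
    -- additive
    (∀ f₁ f₂ : S3, Theta1 (f₁ + f₂) = Theta1 f₁ + Theta1 f₂) ∧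
    -- `S^G`-linear, the `S^G`-action on `R` being multiplication in the first factor
    (∀ s f : S3, (∀ g : G3, actS g s = s) → (∀ h ∈ H3, actS h f = chi h • f) →
      Theta1 (s * f) = (s ⊗ₜ[F3] (1 : Lam)) * Theta1 f) ∧
    -- bijective from `S^H_χ` onto the `G`-invariant `1`-forms
    Set.BijOn Theta1 {f : S3 | ∀ h ∈ H3, actS h f = chi h • f}
      (oneForms ∩ {z : Rf | ∀ g : G3, actR g z = z}) := by
  constructor
  · -- well defined
    intro f hf
    obtain ⟨hI, hJ⟩ := gen_of_relInv f hf
    exact ⟨⟨f, actS tm f, actS tm (actS tm f), rfl⟩,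
      fun g => inv_all _ (actR_tm_Theta f) (actR_im_Theta f hI hJ) g⟩
  constructor
  · -- additive
    intro f1 f2
    unfold Theta1
    simp only [map_add, TensorProduct.add_tmul]
    abel
  constructor
  · -- S^G-linear
    intro s f hs _
    unfold Theta1
    rw [_root_.map_mul, hs tm, _root_.map_mul, hs tm]
    simp only [mul_add, Algebra.TensorProduct.tmul_mul_tmul, one_mul]
  · -- bijective
    refine ⟨?_, ?_, ?_⟩
    · -- maps to
      intro f hf
      obtain ⟨hI, hJ⟩ := gen_of_relInv f hf
      exact ⟨⟨f, actS tm f, actS tm (actS tm f), rfl⟩,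
        fun g => inv_all _ (actR_tm_Theta f) (actR_im_Theta f hI hJ) g⟩
    · -- injective
      intro f hf f' hf' h
      unfold Theta1 at h
      exact (extract _ _ _ _ _ _ h).1
    · -- surjective
      intro z hz
      obtain ⟨⟨f1, f2, f3, rfl⟩, hG⟩ := hz
      have ht := hG tm
      rw [map_add, map_add, actR_tmul, actR_tmul, actR_tmul, mapLtm0, mapLtm1, mapLtm2] at ht
      have ht' : actS tm f3 ⊗ₜ[F3] yy 0 + actS tm f1 ⊗ₜ[F3] yy 1 + actS tm f2 ⊗ₜ[F3] yy 2
          = f1 ⊗ₜ[F3] yy 0 + f2 ⊗ₜ[F3] yy 1 + f3 ⊗ₜ[F3] yy 2 := by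
        rw [← ht]; abel
      obtain ⟨e1, e2, e3⟩ := extract _ _ _ _ _ _ ht'
      have hi := hG im
      rw [map_add, map_add, actR_tmul, actR_tmul, actR_tmul, mapLim0, mapLim1, mapLim2] at hi
      simp only [TensorProduct.tmul_neg, ← TensorProduct.neg_tmul] at hi
      obtain ⟨q1, q2, q3⟩ := extract _ _ _ _ _ _ hi
      have hI : actS im f1 = f1 := q1
      have hJ : actS jm f1 = -f1 := by
        rw [← e2] at q2
        have hx : actS im (actS tm f1) = actS tm (actS jm f1) := by
          rw [actS_actS, it_eq, ← actS_actS]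
        have h3 : actS tm (actS jm f1) = -(actS tm f1) := by
          rw [← hx]; exact neg_eq_iff_eq_neg.mp q2
        have h4 := congrArg (fun u => actS tm (actS tm u)) h3
        rw [actS_tm3, map_neg, map_neg, actS_tm3] at h4
        exact h4
      refine ⟨f1, relInv_of_gen f1 hI hJ, ?_⟩
      unfold Theta1
      rw [e2, e3]
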